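/- Let a, b, c, d be affinely independent points of EuclideanSpace ℝ (Fin 3). Then it is not the case that both ∠ a b d + ∠ a b c > π and ∠ d a b + ∠ b a c > π hold (i.e., face A=bdc cannot fail at b while face B=cda fails at a). -/

import Mathlib

open EuclideanGeometry Real
set_option maxHeartbeats 1000000

lemma not_collinear_sub {a b c d : EuclideanSpace ℝ (Fin 3)}
    (h : AffineIndependent ℝ ![a, b, c, d]) (i j k : Fin 4)
    (hij : i ≠ j) (hik : i ≠ k) (hjk : j ≠ k) :
    ¬ Collinear ℝ ({![a,b,c,d] i, ![a,b,c,d] j, ![a,b,c,d] k} : Set (EuclideanSpace ℝ (Fin 3))) := by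
  have := h.comp_embedding ⟨![i, j, k], by
    intro x y hxy
    fin_cases x <;> fin_cases y <;> simp_all⟩
  have h3 : AffineIndependent ℝ ![![a,b,c,d] i, ![a,b,c,d] j, ![a,b,c,d] k] := by
    convert this using 1
    ext x : 1
    fin_cases x <;> rfl
  exact affineIndependent_iff_not_collinear_set.mp h3

/-- Face `A = bdc` cannot fail at `b` while face `B = cda` fails at `a`. -/
theorem not_opposite_failures
    (a b c d : EuclideanSpace ℝ (Fin 3))
    (h : AffineIndependent ℝ ![a, b, c, d]) :
    ¬ (∠ a b d + ∠ a b c > π ∧ ∠ d a b + ∠ b a c > π) := by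
  rintro ⟨h1, h2⟩
  have hbda : ¬ Collinear ℝ ({b, d, a} : Set (EuclideanSpace ℝ (Fin 3))) := by
    simpa using not_collinear_sub h 1 3 0 (by decide) (by decide) (by decide)
  have hbca : ¬ Collinear ℝ ({b, c, a} : Set (EuclideanSpace ℝ (Fin 3))) := by
    simpa using not_collinear_sub h 1 2 0 (by decide) (by decide) (by decide)
  have had : a ≠ d := by simpa using h.injective.ne (show (0:Fin 4) ≠ 3 by decide)
  have hbd : b ≠ d := by simpa using h.injective.ne (show (1:Fin 4) ≠ 3 by decide)
  have hac : a ≠ c := by simpa using h.injective.ne (show (0:Fin 4) ≠ 2 by decide)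
  have hbc : b ≠ c := by simpa using h.injective.ne (show (1:Fin 4) ≠ 2 by decide)
  have s1 : ∠ d a b + ∠ a b d + ∠ b d a = π :=
    angle_add_angle_add_angle_eq_pi b had
  have s2 : ∠ c a b + ∠ a b c + ∠ b c a = π :=
    angle_add_angle_add_angle_eq_pi b hac
  have p1 : 0 < ∠ b d a := angle_pos_of_not_collinear hbda
  have p2 : 0 < ∠ b c a := angle_pos_of_not_collinear hbca
  rw [angle_comm b a c] at h2
  linarith
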